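/- For n ≥ 5, the dihedral group D_{2n} of symmetries of a regular n-gon, viewed as a subgroup of S_n, is not equal to any wreath product K ≀ T with K ≤ S_k, T ≤ S_t, kt = n and k, t > 1. (Proof idea: every element of D_{2n} fixes 0, 1, 2, or n points, whereas a wreath product K ≀ T with nontrivial factors contains elements whose fixed-point counts are multiples of k strictly between 0 and n.) -/

import Mathlib

namespace PaperSCD

variable {β : Type*}

/-- `x` is covered by `y` with respect to the order relation `le`. -/
def Covers (le : β → β → Prop) (x y : β) : Prop :=
  le x y ∧ x ≠ y ∧ ∀ z, le x z → le z y → z = x ∨ z = y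

/-- `r` is a rank function for the order `le`: covers raise rank by one and
minimal elements have rank zero. -/
def IsRankFn (le : β → β → Prop) (r : β → ℕ) : Prop :=
  (∀ x y, Covers le x y → r y = r x + 1) ∧ ∀ x, (∀ y, le y x → y = x) → r x = 0

/-- `C` is a chain with respect to `le`. -/
def IsChn (le : β → β → Prop) (C : Set β) : Prop :=
  ∀ x ∈ C, ∀ y ∈ C, le x y ∨ le y x

/-- `x` is covered by `y` inside the subposet `S`. -/
def CoversIn (le : β → β → Prop) (S : Set β) (x y : β) : Prop :=
  x ∈ S ∧ y ∈ S ∧ le x y ∧ x ≠ y ∧ ∀ z ∈ S, le x z → le z y → z = x ∨ z = y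

/-- The chain `C` is saturated in the ambient order: consecutive elements of `C`
are covers in the ambient order. -/
def SatChn (le : β → β → Prop) (C : Set β) : Prop :=
  ∀ x ∈ C, ∀ y ∈ C, CoversIn le C x y → Covers le x y

/-- `C` is a nonempty saturated chain which is symmetric for rank function `r`
in a poset of rank `R`. -/
def IsSymmSatChain (le : β → β → Prop) (r : β → ℕ) (R : ℕ) (C : Set β) : Prop :=
  C.Nonempty ∧ IsChn le C ∧ SatChn le C ∧
    ∃ a ∈ C, ∃ b ∈ C, (∀ x ∈ C, le a x ∧ le x b) ∧ r a + r b = R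

/-- `𝒟` is a symmetric chain decomposition. -/
def IsSCD (le : β → β → Prop) (r : β → ℕ) (R : ℕ) (𝒟 : Set (Set β)) : Prop :=
  (∀ C ∈ 𝒟, IsSymmSatChain le r R C) ∧ ∀ x : β, ∃! C, C ∈ 𝒟 ∧ x ∈ C

/-- The order `le` is a symmetric chain order. -/
def IsSCO (le : β → β → Prop) : Prop :=
  ∃ (r : β → ℕ) (R : ℕ) (𝒟 : Set (Set β)),
    IsRankFn le r ∧ (∀ x, r x ≤ R) ∧ (Nonempty β → ∃ x, r x = R) ∧ IsSCD le r R 𝒟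

/-- The quotient order on `Quot rel`: `[x] ≤ [y]` iff some representatives are comparable. -/
def qle (rel : β → β → Prop) (le : β → β → Prop) (a b : Quot rel) : Prop :=
  ∃ x y : β, Quot.mk rel x = a ∧ Quot.mk rel y = b ∧ le x y

/-- The permutation `(i, r) ↦ (ρ_r i, τ r)` of `[k] × [t]`. -/
def wrPerm {k t : ℕ} (ρ : Fin t → Equiv.Perm (Fin k)) (τ : Equiv.Perm (Fin t)) :
    Equiv.Perm (Fin k × Fin t) where
  toFun p := (ρ p.2 p.1, τ p.2)
  invFun p := ((ρ (τ.symm p.2)).symm p.1, τ.symm p.2)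
  left_inv := by rintro ⟨i, r⟩; simp
  right_inv := by rintro ⟨i, r⟩; simp

/-- The wreath product `K ≀ T` as a set of permutations of `[k] × [t]`. -/
def wreathSet {k t : ℕ} (K : Subgroup (Equiv.Perm (Fin k))) (T : Subgroup (Equiv.Perm (Fin t))) :
    Set (Equiv.Perm (Fin k × Fin t)) :=
  { φ | ∃ ρ τ, (∀ r, ρ r ∈ K) ∧ τ ∈ T ∧ φ = wrPerm ρ τ }

/-- A subgroup of a permutation group is generated by powers of pairwise disjoint cycles. -/
def GenByPowersOfDisjointCycles {α : Type*} (T : Subgroup (Equiv.Perm α)) : Prop :=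
  ∃ (m : ℕ) (σ : Fin m → Equiv.Perm α) (e : Fin m → ℕ),
    (∀ i, (σ i).IsCycle) ∧ (∀ i j, i ≠ j → (σ i).Disjoint (σ j)) ∧
    T = Subgroup.closure (Set.range fun i => σ i ^ e i)

/-- The `r`-th column of a subset of `[k] × [t]`, identified with a subset of `[k]`. -/
def col {k t : ℕ} (X : Finset (Fin k × Fin t)) (r : Fin t) : Finset (Fin k) :=
  (X.filter fun p => p.2 = r).image Prod.fst

/-- Orbit relation of `K ≤ S_k` on subsets of `[k]`. -/
def relK {k : ℕ} (K : Subgroup (Equiv.Perm (Fin k))) :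
    Finset (Fin k) → Finset (Fin k) → Prop :=
  fun A B => ∃ g ∈ K, A.image ⇑g = B

/-- Orbit relation of the wreath product `K ≀ T` on subsets of `[k] × [t]`. -/
def relW {k t : ℕ} (K : Subgroup (Equiv.Perm (Fin k))) (T : Subgroup (Equiv.Perm (Fin t))) :
    Finset (Fin k × Fin t) → Finset (Fin k × Fin t) → Prop :=
  fun X Y => ∃ φ ∈ wreathSet K T, X.image ⇑φ = Y

/-- The rank (cardinality of a representative) on `B_k/K`. -/
def qrank {k : ℕ} (K : Subgroup (Equiv.Perm (Fin k))) : Quot (relK K) → ℕ :=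
  Quot.lift Finset.card (by
    rintro A B ⟨g, -, rfl⟩
    exact (Finset.card_image_of_injective A g.injective).symm)

/-- The coordinate-permuting action `σ • f = f ∘ σ⁻¹`. -/
def actF {n : ℕ} {γ : Type*} (σ : Equiv.Perm (Fin n)) (f : Fin n → γ) : Fin n → γ :=
  fun i => f (σ.symm i)

/-- `τ` stabilizes `j̄` under the coordinate-permuting action. -/
def ActStab {t s : ℕ} (τ : Equiv.Perm (Fin t)) (j : Fin t → Fin s) : Prop :=
  ∀ r, j (τ.symm r) = j r

end PaperSCD
open PaperSCD

/-- Transport of a set of permutations of `[k] × [t]` along an identification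
`e : [k] × [t] ≃ [n]`. -/
def conjSet {n k t : ℕ} (e : Fin k × Fin t ≃ Fin n)
    (S : Set (Equiv.Perm (Fin k × Fin t))) : Set (Equiv.Perm (Fin n)) :=
  (fun φ => (e.symm.trans φ).trans e) '' S

open scoped Fin.NatCast Fin.CommRing

section Aux

variable {m : ℕ}

private lemma rot_pow_apply (a : ℕ) (i : Fin (m+1)) :
    ((finRotate (m+1)) ^ a) i = i + (a : Fin (m+1)) := by
  induction a with
  | zero => simp
  | succ a ih =>
      rw [pow_succ', Equiv.Perm.mul_apply, ih, finRotate_succ_apply]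
      push_cast
      ring

private lemma rev_apply (i : Fin (m+1)) : Fin.revPerm i = -i - 1 := by
  rw [Fin.revPerm_apply, ← Fin.last_sub]
  have hlast : (Fin.last m) = (-1 : Fin (m+1)) := by
    apply Fin.ext
    simp [Fin.coe_neg_one]
  rw [hlast]; ring

private lemma rev_mul_rot_pow (a : ℕ) :
    (Fin.revPerm : Equiv.Perm (Fin (m+1))) * (finRotate (m+1)) ^ a
      = (finRotate (m+1)) ^ (m * a) * Fin.revPerm := by
  have hinv : (finRotate (m+1))⁻¹ = (finRotate (m+1)) ^ m := by
    symm
    apply eq_inv_of_mul_eq_one_right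
    ext i
    rw [← pow_succ', rot_pow_apply]
    simp
  have hsc : SemiconjBy (Fin.revPerm : Equiv.Perm (Fin (m+1)))
      (finRotate (m+1)) ((finRotate (m+1)) ^ m) := by
    rw [← hinv]
    show _ * _ = _ * _
    have key : finRotate (m+1) * ((Fin.revPerm : Equiv.Perm (Fin (m+1))) * finRotate (m+1))
        = Fin.revPerm := by
      ext i
      simp only [Equiv.Perm.mul_apply, rev_apply, finRotate_succ_apply]
      ring
    calc Fin.revPerm * finRotate (m+1)
        = (finRotate (m+1))⁻¹ * (finRotate (m+1) * (Fin.revPerm * finRotate (m+1))) := by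
          group
      _ = (finRotate (m+1))⁻¹ * Fin.revPerm := by rw [key]
  have := (hsc.pow_right a)
  rw [← pow_mul] at this
  exact this

private lemma rev_mul_rev :
    (Fin.revPerm : Equiv.Perm (Fin (m+1))) * Fin.revPerm = 1 := by
  ext i
  simp [Equiv.Perm.mul_apply]

private lemma dihedral_struct {g : Equiv.Perm (Fin (m+1))}
    (hg : g ∈ Subgroup.closure {finRotate (m+1), (Fin.revPerm : Equiv.Perm (Fin (m+1)))}) :
    (∃ a : ℕ, g = finRotate (m+1) ^ a) ∨
      ∃ a : ℕ, g = finRotate (m+1) ^ a * Fin.revPerm := by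
  induction hg using Subgroup.closure_induction with
  | mem x hx =>
      rcases hx with rfl | rfl
      · exact Or.inl ⟨1, (pow_one _).symm⟩
      · exact Or.inr ⟨0, by rw [pow_zero, one_mul]⟩
  | one => exact Or.inl ⟨0, (pow_zero _).symm⟩
  | mul x y hx hy ihx ihy =>
      rcases ihx with ⟨a, rfl⟩ | ⟨a, rfl⟩ <;> rcases ihy with ⟨b, rfl⟩ | ⟨b, rfl⟩
      · exact Or.inl ⟨a + b, (pow_add _ _ _).symm⟩
      · exact Or.inr ⟨a + b, by rw [← mul_assoc, ← pow_add]⟩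
      · refine Or.inr ⟨a + m * b, ?_⟩
        rw [mul_assoc, rev_mul_rot_pow, ← mul_assoc, ← pow_add]
      · refine Or.inl ⟨a + m * b, ?_⟩
        calc finRotate (m+1) ^ a * Fin.revPerm * (finRotate (m+1) ^ b * Fin.revPerm)
            = finRotate (m+1) ^ a * (Fin.revPerm * finRotate (m+1) ^ b) * Fin.revPerm := by
              group
          _ = finRotate (m+1) ^ a * (finRotate (m+1) ^ (m*b) * Fin.revPerm) * Fin.revPerm := by
              rw [rev_mul_rot_pow]
          _ = finRotate (m+1) ^ (a + m*b) * (Fin.revPerm * Fin.revPerm) := by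
              rw [pow_add]; group
          _ = finRotate (m+1) ^ (a + m*b) := by rw [rev_mul_rev, mul_one]
  | inv x hx ihx =>
      rcases ihx with ⟨a, rfl⟩ | ⟨a, rfl⟩
      · refine Or.inl ⟨m * a, ?_⟩
        have h2 : finRotate (m+1) ^ a * finRotate (m+1) ^ (m * a) = 1 := by
          have h1 : finRotate (m+1) ^ ((m+1) * a) = 1 := by
            ext i
            rw [rot_pow_apply]
            simp
          rw [← pow_add, show a + m * a = (m+1) * a by ring]
          exact h1
        exact inv_eq_of_mul_eq_one_right h2
      · refine Or.inr ⟨a, ?_⟩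
        have h2 : (finRotate (m+1) ^ a * Fin.revPerm) * (finRotate (m+1) ^ a * Fin.revPerm)
            = 1 := by
          have h1 : finRotate (m+1) ^ ((m+1) * a) = 1 := by
            ext i
            rw [rot_pow_apply]
            simp
          calc finRotate (m+1) ^ a * Fin.revPerm * (finRotate (m+1) ^ a * Fin.revPerm)
              = finRotate (m+1) ^ a * (Fin.revPerm * finRotate (m+1) ^ a) * Fin.revPerm := by
                group
            _ = finRotate (m+1) ^ a * (finRotate (m+1) ^ (m*a) * Fin.revPerm) * Fin.revPerm := by
                rw [rev_mul_rot_pow]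
            _ = finRotate (m+1) ^ (a + m*a) * (Fin.revPerm * Fin.revPerm) := by
                rw [pow_add]; group
            _ = 1 := by
                rw [rev_mul_rev, mul_one, show a + m * a = (m+1) * a by ring, h1]
        exact inv_eq_of_mul_eq_one_right h2

end Aux


section Aux2
variable {m : ℕ}

private lemma double_eq (u : Fin (m+1)) (hu : u ≠ 0) (h : u + u = 0) :
    u.val + u.val = m + 1 := by
  have hv : (u.val + u.val) % (m+1) = 0 := by
    have h' := congrArg Fin.val h
    rwa [Fin.val_add] at h'
  have hne : u.val ≠ 0 := fun h0 => hu (Fin.ext h0)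
  have hlt : u.val < m + 1 := u.isLt
  obtain ⟨c, hc⟩ := Nat.dvd_of_mod_eq_zero hv
  rcases c with _ | _ | c
  · omega
  · omega
  · have hexp : (m+1) * (c+1+1) = (m+1) * c + (m+1) + (m+1) := by ring
    omega

private lemma three_fixed {x y z : Fin (m+1)} (hxy : x ≠ y) (hxz : x ≠ z) (hyz : y ≠ z)
    (h1 : x + x = y + y) (h2 : x + x = z + z) : False := by
  have hu : (y - x) + (y - x) = 0 := by linear_combination -h1
  have hv : (z - x) + (z - x) = 0 := by linear_combination -h2
  have hu0 : y - x ≠ 0 := sub_ne_zero_of_ne (Ne.symm hxy)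
  have hv0 : z - x ≠ 0 := sub_ne_zero_of_ne (Ne.symm hxz)
  have e1 := double_eq _ hu0 hu
  have e2 := double_eq _ hv0 hv
  have : (y - x) = (z - x) := Fin.ext (by omega)
  exact hyz (by linear_combination this)

private lemma rot_pow_apply' (a : ℕ) (i : Fin (m+1)) :
    ((finRotate (m+1)) ^ a) i = i + (a : Fin (m+1)) := by
  induction a with
  | zero => simp
  | succ a ih =>
      rw [pow_succ', Equiv.Perm.mul_apply, ih, finRotate_succ_apply]
      push_cast
      ring

private lemma fixed_rot {a : ℕ} {x : Fin (m+1)} (hx : (finRotate (m+1) ^ a) x = x) :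
    finRotate (m+1) ^ a = 1 := by
  rw [rot_pow_apply'] at hx
  have h0 : (a : Fin (m+1)) = 0 := by
    have := hx
    rwa [add_eq_left] at this
  ext i
  rw [rot_pow_apply', h0, add_zero, Equiv.Perm.one_apply]

end Aux2

/-- For `n ≥ 5`, the dihedral group `D_{2n} ≤ S_n` (generated by the
`n`-cycle and the reflection) is not equal to any wreath product `K ≀ T` with `K ≤ S_k`,
`T ≤ S_t`, `kt = n` and `k, t > 1`, under any identification of `[k] × [t]` with `[n]`. -/
theorem stmt_17 (n : ℕ) (hn : 5 ≤ n) :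
    ¬ ∃ (k t : ℕ) (_ : 1 < k) (_ : 1 < t) (_ : k * t = n)
        (e : Fin k × Fin t ≃ Fin n)
        (K : Subgroup (Equiv.Perm (Fin k))) (T : Subgroup (Equiv.Perm (Fin t))),
      ((Subgroup.closure {finRotate n, (Fin.revPerm : Equiv.Perm (Fin n))} :
          Subgroup (Equiv.Perm (Fin n))) : Set (Equiv.Perm (Fin n)))
        = conjSet e (wreathSet K T) := by

  rintro ⟨k, t, hk, ht, hkt, e, K, T, h⟩
  obtain ⟨m, rfl⟩ : ∃ m, n = m + 1 := ⟨n - 1, by omega⟩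
  have hwr : ∀ (ρ : Fin t → Equiv.Perm (Fin k)) (τ : Equiv.Perm (Fin t)) (p : Fin k × Fin t),
      wrPerm ρ τ p = (ρ p.2 p.1, τ p.2) := fun ρ τ p => rfl
  by_cases hK : ∀ σ ∈ K, σ = 1
  · -- K is trivial: the rotation cannot lie in the wreath set
    have hmem : finRotate (m+1) ∈ conjSet e (wreathSet K T) := by
      rw [← h]
      exact SetLike.mem_coe.mpr (Subgroup.subset_closure (Set.mem_insert _ _))
    obtain ⟨φ, hφ, hφe⟩ := hmem
    obtain ⟨ρ, τ, hρ, hτ, rfl⟩ := hφ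
    have hρ1 : ∀ r, ρ r = 1 := fun r => hK _ (hρ r)
    have happ : ∀ p : Fin k × Fin t, finRotate (m+1) (e p) = e (p.1, τ p.2) := by
      intro p
      rw [← hφe]
      simp only [Equiv.trans_apply, Equiv.symm_apply_apply]
      rw [hwr, hρ1]
      rfl
    set p0 : Fin k × Fin t := (⟨0, by omega⟩, ⟨0, by omega⟩) with hp0
    have hpow : ∀ a : ℕ, (finRotate (m+1) ^ a) (e p0) = e (p0.1, (τ ^ a) p0.2) := by
      intro a
      induction a with
      | zero => simp
      | succ a ih =>
          rw [pow_succ', Equiv.Perm.mul_apply, ih, happ, pow_succ', Equiv.Perm.mul_apply]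
    have htlt : t < m + 1 := by
      have h2t : 2 * t ≤ k * t := Nat.mul_le_mul_right t hk
      omega
    obtain ⟨a, ha, b, hb, hab, hfab⟩ :=
      Finset.exists_ne_map_eq_of_card_lt_of_maps_to
        (s := Finset.range (t+1)) (t := (Finset.univ : Finset (Fin t)))
        (f := fun a => (τ ^ a) p0.2)
        (by simpa using Nat.lt_succ_self t) (fun a _ => Finset.mem_univ _)
    have heq : (finRotate (m+1) ^ a) (e p0) = (finRotate (m+1) ^ b) (e p0) := by
      rw [hpow, hpow, hfab]
    rw [rot_pow_apply', rot_pow_apply'] at heq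
    have hcast : (a : Fin (m+1)) = (b : Fin (m+1)) := add_left_cancel heq
    have hval := congrArg Fin.val hcast
    rw [Fin.val_natCast, Fin.val_natCast] at hval
    simp only [Finset.mem_range] at ha hb
    rw [Nat.mod_eq_of_lt (by omega), Nat.mod_eq_of_lt (by omega)] at hval
    exact hab hval
  · -- K is nontrivial: build an element with ≥ 3 but not all fixed points
    push_neg at hK
    obtain ⟨σ, hσK, hσ1⟩ := hK
    obtain ⟨i0, hi0⟩ : ∃ i, σ i ≠ i := by
      by_contra hc
      push_neg at hc
      exact hσ1 (Equiv.ext hc)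
    have htpos : 0 < t := by omega
    set r0 : Fin t := ⟨0, htpos⟩ with hr0
    set ρ : Fin t → Equiv.Perm (Fin k) := fun r => if r = r0 then σ else 1 with hρdef
    have hρK : ∀ r, ρ r ∈ K := by
      intro r
      by_cases h' : r = r0 <;> simp [hρdef, h', hσK, one_mem]
    set g : Equiv.Perm (Fin (m+1)) := (e.symm.trans (wrPerm ρ 1)).trans e with hgdef
    have hgD : g ∈ Subgroup.closure
        {finRotate (m+1), (Fin.revPerm : Equiv.Perm (Fin (m+1)))} := by
      have hg' : g ∈ conjSet e (wreathSet K T) := ⟨wrPerm ρ 1, ⟨ρ, 1, hρK, one_mem T, rfl⟩, rfl⟩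
      rw [← h] at hg'
      exact SetLike.mem_coe.mp hg'
    have hg_app : ∀ p : Fin k × Fin t, g (e p) = e (ρ p.2 p.1, p.2) := by
      intro p
      simp only [hgdef, Equiv.trans_apply, Equiv.symm_apply_apply]
      rw [hwr]
      rfl
    have hfix : ∀ p : Fin k × Fin t, p.2 ≠ r0 → g (e p) = e p := by
      intro p hp
      rw [hg_app]
      simp [hρdef, hp]
    have hg_ne : g ≠ 1 := by
      intro hg1
      have h1 : g (e (i0, r0)) = e (i0, r0) := by rw [hg1, Equiv.Perm.one_apply]
      rw [hg_app] at h1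
      simp only [hρdef, if_pos rfl] at h1
      exact hi0 (congrArg Prod.fst (e.injective h1))
    obtain ⟨p1, p2, p3, h12, h13, h23, hq1, hq2, hq3⟩ :
        ∃ p1 p2 p3 : Fin k × Fin t, p1 ≠ p2 ∧ p1 ≠ p3 ∧ p2 ≠ p3 ∧
          p1.2 ≠ r0 ∧ p2.2 ≠ r0 ∧ p3.2 ≠ r0 := by
      by_cases h3 : 3 ≤ k
      · refine ⟨(⟨0, by omega⟩, ⟨1, by omega⟩), (⟨1, by omega⟩, ⟨1, by omega⟩),
          (⟨2, by omega⟩, ⟨1, by omega⟩), ?_, ?_, ?_, ?_, ?_, ?_⟩ <;>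
          simp [hr0, Prod.ext_iff, Fin.ext_iff]
      · have hk2 : k = 2 := by omega
        subst hk2
        have ht3 : 3 ≤ t := by omega
        refine ⟨(⟨0, by omega⟩, ⟨1, by omega⟩), (⟨1, by omega⟩, ⟨1, by omega⟩),
          (⟨0, by omega⟩, ⟨2, by omega⟩), ?_, ?_, ?_, ?_, ?_, ?_⟩ <;>
          simp [hr0, Prod.ext_iff, Fin.ext_iff]
    have hx12 : e p1 ≠ e p2 := fun hh => h12 (e.injective hh)
    have hx13 : e p1 ≠ e p3 := fun hh => h13 (e.injective hh)
    have hx23 : e p2 ≠ e p3 := fun hh => h23 (e.injective hh)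
    rcases dihedral_struct hgD with ⟨a, hga⟩ | ⟨a, hga⟩
    · exact hg_ne (hga.trans (fixed_rot (m := m) (a := a) (by rw [← hga]; exact hfix p1 hq1)))
    · have key : ∀ p : Fin k × Fin t, p.2 ≠ r0 →
          e p + e p = (a : Fin (m+1)) - 1 := by
        intro p hp
        have hxp : ((finRotate (m+1) ^ a * Fin.revPerm : Equiv.Perm (Fin (m+1)))) (e p) = e p := by
          rw [← hga]; exact hfix p hp
        rw [Equiv.Perm.mul_apply, rev_apply, rot_pow_apply'] at hxp
        linear_combination -hxp
      exact three_fixed hx12 hx13 hx23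
        ((key p1 hq1).trans (key p2 hq2).symm) ((key p1 hq1).trans (key p3 hq3).symm)
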